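/- Let n ≥ 1, m ≥ 4n−1, and let R_s ∈ ℂ^{n×n} be the slit reference, R_s(t1,t2) = 1 if t2 = n−1 and 0 otherwise. Then for all k1, k2 ∈ {0,...,m−1}, the reference scaling factor is S_{R_s}(k1,k2) = (n/m⁴)·[1 + 2(n−1)(1 − cos(2π·k2/m))]. -/

import Mathlib

open Complex MeasureTheory ProbabilityTheory Matrix ComplexConjugate
open scoped Kronecker

noncomputable section

/-- Zero-extension of a matrix to integer indices: out-of-range entries are `0`. -/
def zext {n1 n2 : ℕ} (X : Matrix (Fin n1) (Fin n2) ℂ) (t1 t2 : ℤ) : ℂ :=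
  if h : 0 ≤ t1 ∧ t1 < (n1 : ℤ) ∧ 0 ≤ t2 ∧ t2 < (n2 : ℤ) then
    X ⟨t1.toNat, by omega⟩ ⟨t2.toNat, by omega⟩
  else 0

/-- Cross-correlation `C_{[X1,X2]}(s1,s2)`, with out-of-range terms taken as `0`. -/
def crossCorr {n1 n2 : ℕ} (X1 X2 : Matrix (Fin n1) (Fin n2) ℂ) (s1 s2 : ℤ) : ℂ :=
  ∑ t1 : Fin n1, ∑ t2 : Fin n2,
    X1 t1 t2 * conj (zext X2 (((t1 : ℕ) : ℤ) - s1) (((t2 : ℕ) : ℤ) - s2))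

/-- Autocorrelation `A_X = C_{[X,X]}`. -/
def autocorr {n1 n2 : ℕ} (X : Matrix (Fin n1) (Fin n2) ℂ) : ℤ → ℤ → ℂ :=
  crossCorr X X

/-- Horizontal concatenation `[X, R]` of two `n × n` matrices. -/
def hcat {n : ℕ} (X R : Matrix (Fin n) (Fin n) ℂ) : Matrix (Fin n) (Fin (2 * n)) ℂ :=
  Matrix.of fun t1 t2 =>
    if h : (t2 : ℕ) < n then X t1 ⟨t2, h⟩ else R t1 ⟨(t2 : ℕ) - n, by omega⟩

/-- The size `m1 × m2` oversampled discrete Fourier transform of an `n1 × n2` signal. -/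
def dft2 {n1 n2 : ℕ} (m1 m2 : ℕ) (Z : Matrix (Fin n1) (Fin n2) ℂ) (k1 k2 : ℕ) : ℂ :=
  ∑ t1 : Fin n1, ∑ t2 : Fin n2,
    Z t1 t2 * Complex.exp (-(2 * (Real.pi : ℂ) * Complex.I) *
      (((t1 : ℕ) : ℂ) * (k1 : ℂ) / (m1 : ℂ) + ((t2 : ℕ) : ℂ) * (k2 : ℂ) / (m2 : ℂ)))

/-- Quadrant cross-correlation `C°_{[X,R]}(i,j) = C_{[X,R]}(i-(n-1), j-(n-1))`. -/
def quadCC {n : ℕ} (X R : Matrix (Fin n) (Fin n) ℂ) : Matrix (Fin n) (Fin n) ℂ :=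
  Matrix.of fun i j =>
    crossCorr X R (((i : ℕ) : ℤ) - ((n : ℤ) - 1)) (((j : ℕ) : ℤ) - ((n : ℤ) - 1))

/-- Columnwise vectorization: the pair `(j, i)` (column `j`, row `i`) indexes entry `X i j`. -/
def vecM {a b : ℕ} (X : Matrix (Fin a) (Fin b) ℂ) : Fin b × Fin a → ℂ :=
  fun p => X p.2 p.1

/-- The matrix `M_R` satisfying `vec (C°_{[X,R]}) = M_R • vec X` (columnwise vectorization). -/
def MR {n : ℕ} (R : Matrix (Fin n) (Fin n) ℂ) :
    Matrix (Fin n × Fin n) (Fin n × Fin n) ℂ :=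
  Matrix.of fun p q =>
    conj (zext R (((q.2 : ℕ) : ℤ) - ((p.2 : ℕ) : ℤ) + ((n : ℤ) - 1))
      (((q.1 : ℕ) : ℤ) - ((p.1 : ℕ) : ℤ) + ((n : ℤ) - 1)))

/-- `P1 · F_LA^*`: row `t ∈ {0,…,n-1}` corresponds to the column `t - (n-1)` of `F_LA`. -/
def P1FLA (n m : ℕ) : Matrix (Fin n) (Fin m) ℂ :=
  Matrix.of fun t k =>
    Complex.exp ((2 * (Real.pi : ℂ) * Complex.I) * ((k : ℕ) : ℂ) *
      (((t : ℕ) : ℂ) - ((n : ℂ) - 1)) / (m : ℂ))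

/-- `P2 · F_RA^*`: row `t ∈ {0,…,n-1}` corresponds to the column `t - (2n-1)` of `F_RA`. -/
def P2FRA (n m : ℕ) : Matrix (Fin n) (Fin m) ℂ :=
  Matrix.of fun t k =>
    Complex.exp ((2 * (Real.pi : ℂ) * Complex.I) * ((k : ℕ) : ℂ) *
      (((t : ℕ) : ℂ) - (2 * (n : ℂ) - 1)) / (m : ℂ))

/-- The referenced-deconvolution matrix
`T_R = (1/m²) · M_R⁻¹ · [(P2 F_RA^*) ⊗ (P1 F_LA^*)]`. -/
def TR {n : ℕ} (m : ℕ) (R : Matrix (Fin n) (Fin n) ℂ) :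
    Matrix (Fin n × Fin n) (Fin m × Fin m) ℂ :=
  ((m : ℂ) ^ 2)⁻¹ • ((MR R)⁻¹ * (P2FRA n m ⊗ₖ P1FLA n m))

/-- The reference scaling factor: `S_R(k1,k2)` is the squared ℓ²-norm of the column of `T_R`
indexed by the pair `(k1, k2)` (i.e. column `m·k1 + k2`). -/
def SR {n : ℕ} (m : ℕ) (R : Matrix (Fin n) (Fin n) ℂ) (k1 k2 : Fin m) : ℝ :=
  ∑ p : Fin n × Fin n, ‖TR m R p (k1, k2)‖ ^ 2

/-- Lower-triangular all-ones matrix `1_L`. -/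
def oneL (n : ℕ) : Matrix (Fin n) (Fin n) ℂ :=
  Matrix.of fun i j => if j ≤ i then 1 else 0

/-- First-order difference matrix `D_n` (the inverse of `1_L`). -/
def Dmat (n : ℕ) : Matrix (Fin n) (Fin n) ℂ :=
  Matrix.of fun i j => if i = j then 1 else if (j : ℕ) + 1 = (i : ℕ) then -1 else 0

/-- Pinhole reference. -/
def pinholeRef (n : ℕ) : Matrix (Fin n) (Fin n) ℂ :=
  Matrix.of fun t1 t2 => if (t1 : ℕ) = n - 1 ∧ (t2 : ℕ) = n - 1 then 1 else 0

/-- Slit reference. -/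
def slitRef (n : ℕ) : Matrix (Fin n) (Fin n) ℂ :=
  Matrix.of fun _ t2 => if (t2 : ℕ) = n - 1 then 1 else 0

/-- Block reference. -/
def blockRef (n : ℕ) : Matrix (Fin n) (Fin n) ℂ :=
  Matrix.of fun _ _ => 1


/-- Explicit inverse of `MR (slitRef n)`. -/
def MinvS (n : ℕ) : Matrix (Fin n × Fin n) (Fin n × Fin n) ℂ :=
  Matrix.of fun p q => if p.1 = q.1 then Dmat n p.2 q.2 else 0

lemma MR_slit (n : ℕ) (p q : Fin n × Fin n) :
    MR (slitRef n) p q = if p.1 = q.1 ∧ q.2 ≤ p.2 then 1 else 0 := by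
  have hq1 := q.1.isLt; have hp1 := p.1.isLt
  have hq2 := q.2.isLt; have hp2 := p.2.isLt
  simp only [MR, Matrix.of_apply]
  unfold zext
  by_cases hb : (0 ≤ (q.2:ℤ) - (p.2:ℤ) + ((n:ℤ)-1) ∧ (q.2:ℤ) - (p.2:ℤ) + ((n:ℤ)-1) < (n:ℤ) ∧
      0 ≤ (q.1:ℤ) - (p.1:ℤ) + ((n:ℤ)-1) ∧ (q.1:ℤ) - (p.1:ℤ) + ((n:ℤ)-1) < (n:ℤ))
  · rw [dif_pos hb]
    simp only [slitRef, Matrix.of_apply]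
    by_cases hc : (((q.1:ℤ) - (p.1:ℤ) + ((n:ℤ)-1)).toNat) = n - 1
    · rw [if_pos hc, _root_.map_one, if_pos]
      refine ⟨Fin.ext ?_, ?_⟩
      · omega
      · rw [Fin.le_def]; omega
    · rw [if_neg hc, _root_.map_zero, if_neg]
      rintro ⟨h1, _⟩
      rw [Fin.ext_iff] at h1
      omega
  · rw [dif_neg hb, _root_.map_zero, if_neg]
    rintro ⟨h1, h2⟩
    rw [Fin.ext_iff] at h1
    rw [Fin.le_def] at h2
    omega

lemma sum_D (n : ℕ) (P r : Fin n) :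
    ∑ q : Fin n, (if q ≤ P then (1:ℂ) else 0) * Dmat n q r = if P = r then 1 else 0 := by
  have key : ∀ q : Fin n, (if q ≤ P then (1:ℂ) else 0) * Dmat n q r
      = (if q = r then (if q ≤ P then (1:ℂ) else 0) else 0)
        - (if (q:ℕ) = (r:ℕ)+1 then (if q ≤ P then (1:ℂ) else 0) else 0) := by
    intro q
    simp only [Dmat, Matrix.of_apply]
    by_cases hqr : q = r
    · have hne : ¬ ((q:ℕ) = (r:ℕ)+1) := by rw [hqr]; omega
      rw [if_pos hqr, if_pos hqr, if_neg hne, mul_one, sub_zero]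
    · rw [if_neg hqr, if_neg hqr, zero_sub]
      by_cases h2 : (r:ℕ)+1 = (q:ℕ)
      · rw [if_pos h2, if_pos (show (q:ℕ) = (r:ℕ)+1 by omega)]; ring
      · rw [if_neg h2, if_neg (show ¬ ((q:ℕ) = (r:ℕ)+1) by omega), mul_zero, neg_zero]
  rw [Finset.sum_congr rfl (fun q _ => key q), Finset.sum_sub_distrib]
  rw [Finset.sum_ite_eq' Finset.univ r (fun q => if q ≤ P then (1:ℂ) else 0)]
  simp only [Finset.mem_univ, if_true]
  by_cases hr : (r:ℕ)+1 < n
  · have hiff : ∀ q : Fin n, ((q:ℕ) = (r:ℕ)+1) ↔ q = (⟨(r:ℕ)+1, hr⟩ : Fin n) := by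
      intro q; simp [Fin.ext_iff]
    simp only [hiff]
    rw [Finset.sum_ite_eq' Finset.univ (⟨(r:ℕ)+1, hr⟩ : Fin n)
      (fun q => if q ≤ P then (1:ℂ) else 0)]
    simp only [Finset.mem_univ, if_true]
    have hP := P.isLt; have hr' := r.isLt
    split_ifs <;> simp only [Fin.le_def, Fin.ext_iff] at * <;>
      first | (exfalso; omega) | norm_num
  · have hnone : ∀ q : Fin n, ¬ ((q:ℕ) = (r:ℕ)+1) := by intro q; have := q.isLt; omega
    simp only [hnone, if_false, Finset.sum_const_zero, sub_zero]
    have hP := P.isLt; have hr' := r.isLt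
    split_ifs <;> simp only [Fin.le_def, Fin.ext_iff] at * <;>
      first | (exfalso; omega) | norm_num

lemma MR_slit_inv (n : ℕ) : (MR (slitRef n))⁻¹ = MinvS n := by
  apply Matrix.inv_eq_right_inv
  ext p r
  rw [Matrix.mul_apply, Matrix.one_apply]
  have key : ∀ q : Fin n × Fin n, MR (slitRef n) p q * MinvS n q r
      = (if q.1 = p.1 then (1:ℂ) else 0) * ((if p.1 = r.1 then (1:ℂ) else 0) *
        ((if q.2 ≤ p.2 then (1:ℂ) else 0) * Dmat n q.2 r.2)) := by
    intro q
    rw [MR_slit]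
    simp only [MinvS, Matrix.of_apply]
    by_cases h1 : q.1 = p.1
    · by_cases h2 : p.1 = r.1
      · rw [if_pos (h1.trans h2)]
        by_cases h3 : q.2 ≤ p.2
        · rw [if_pos ⟨h1.symm, h3⟩, if_pos h1, if_pos h2, if_pos h3]; ring
        · rw [if_neg (fun hc => h3 hc.2), if_pos h1, if_pos h2, if_neg h3]; ring
      · rw [if_neg (fun hc => h2 (h1.symm.trans hc)), if_neg h2]
        simp
    · rw [if_neg (fun hc => h1 hc.1.symm), if_neg h1]
      simp
  rw [Finset.sum_congr rfl (fun q _ => key q)]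
  rw [Fintype.sum_prod_type]
  have inner : ∀ q1 : Fin n,
      ∑ q2 : Fin n, (if q1 = p.1 then (1:ℂ) else 0) * ((if p.1 = r.1 then (1:ℂ) else 0) *
        ((if q2 ≤ p.2 then (1:ℂ) else 0) * Dmat n q2 r.2))
      = (if q1 = p.1 then (1:ℂ) else 0) * ((if p.1 = r.1 then (1:ℂ) else 0) *
        (if p.2 = r.2 then 1 else 0)) := by
    intro q1
    rw [← Finset.mul_sum, ← Finset.mul_sum, sum_D]
  rw [Finset.sum_congr rfl (fun q1 _ => inner q1)]
  rw [← Finset.sum_mul]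
  rw [Finset.sum_ite_eq' Finset.univ p.1 (fun _ => (1:ℂ))]
  simp only [Finset.mem_univ, if_true, one_mul]
  by_cases h2 : p.1 = r.1 <;> by_cases h3 : p.2 = r.2 <;>
    simp_all [Prod.ext_iff]

lemma sum_D_row (n : ℕ) (P : Fin n) (f : Fin n → ℂ) :
    ∑ q : Fin n, Dmat n P q * f q
      = f P - (if h : 0 < (P:ℕ) then
          f ⟨(P:ℕ)-1, Nat.lt_of_le_of_lt (Nat.sub_le _ _) P.isLt⟩ else 0) := by
  have key : ∀ q : Fin n, Dmat n P q * f q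
      = (if q = P then f q else 0)
        - (if (q:ℕ) = (P:ℕ)-1 ∧ 0 < (P:ℕ) then f q else 0) := by
    intro q
    simp only [Dmat, Matrix.of_apply]
    have hq := q.isLt; have hP := P.isLt
    by_cases hqP : P = q
    · have hne : ¬ ((q:ℕ) = (P:ℕ)-1 ∧ 0 < (P:ℕ)) := by
        rw [← hqP]; omega
      rw [if_pos hqP, if_pos hqP.symm, if_neg hne, one_mul, sub_zero]
    · have hne : ¬ (q = P) := fun hc => hqP hc.symm
      rw [if_neg hqP, if_neg hne, zero_sub]
      by_cases h2 : (q:ℕ)+1 = (P:ℕ)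
      · rw [if_pos h2, if_pos (show (q:ℕ) = (P:ℕ)-1 ∧ 0 < (P:ℕ) by omega)]; ring
      · rw [if_neg h2, if_neg (show ¬ ((q:ℕ) = (P:ℕ)-1 ∧ 0 < (P:ℕ)) by omega),
          zero_mul, neg_zero]
  rw [Finset.sum_congr rfl (fun q _ => key q), Finset.sum_sub_distrib]
  rw [Finset.sum_ite_eq' Finset.univ P f]
  simp only [Finset.mem_univ, if_true]
  congr 1
  by_cases hP : 0 < (P:ℕ)
  · have hlt : (P:ℕ)-1 < n := Nat.lt_of_le_of_lt (Nat.sub_le _ _) P.isLt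
    have hiff : ∀ q : Fin n, ((q:ℕ) = (P:ℕ)-1 ∧ 0 < (P:ℕ)) ↔ q = (⟨(P:ℕ)-1, hlt⟩ : Fin n) := by
      intro q; simp [Fin.ext_iff, hP]
    simp only [hiff]
    rw [Finset.sum_ite_eq' Finset.univ (⟨(P:ℕ)-1, hlt⟩ : Fin n) f]
    simp [hP]
  · simp [hP]

lemma TR_slit (n m : ℕ) (p : Fin n × Fin n) (k1 k2 : Fin m) :
    TR m (slitRef n) p (k1, k2) =
      ((m:ℂ)^2)⁻¹ * (P2FRA n m p.1 k1 *
        (P1FLA n m p.2 k2 - if h : 0 < ((p.2:ℕ)) then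
          P1FLA n m ⟨(p.2:ℕ)-1, Nat.lt_of_le_of_lt (Nat.sub_le _ _) p.2.isLt⟩ k2 else 0)) := by
  simp only [TR, Matrix.smul_apply, smul_eq_mul]
  congr 1
  rw [MR_slit_inv, Matrix.mul_apply]
  have key : ∀ q : Fin n × Fin n,
      MinvS n p q * (P2FRA n m ⊗ₖ P1FLA n m) q (k1, k2)
      = (if q.1 = p.1 then (1:ℂ) else 0) *
          (P2FRA n m q.1 k1 * (Dmat n p.2 q.2 * P1FLA n m q.2 k2)) := by
    intro q
    simp only [MinvS, Matrix.of_apply, Matrix.kroneckerMap_apply]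
    by_cases h : p.1 = q.1
    · rw [if_pos h, if_pos h.symm]; ring
    · rw [if_neg h, if_neg (fun hc => h hc.symm)]; simp
  rw [Finset.sum_congr rfl (fun q _ => key q), Fintype.sum_prod_type]
  have inner : ∀ q1 : Fin n,
      ∑ q2 : Fin n, (if q1 = p.1 then (1:ℂ) else 0) *
          (P2FRA n m q1 k1 * (Dmat n p.2 q2 * P1FLA n m q2 k2))
      = (if q1 = p.1 then (1:ℂ) else 0) * (P2FRA n m q1 k1 *
          (P1FLA n m p.2 k2 - if h : 0 < ((p.2:ℕ)) then
            P1FLA n m ⟨(p.2:ℕ)-1, Nat.lt_of_le_of_lt (Nat.sub_le _ _) p.2.isLt⟩ k2 else 0)) := by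
    intro q1
    rw [← Finset.mul_sum, ← Finset.mul_sum, sum_D_row n p.2 (fun q2 => P1FLA n m q2 k2)]
  rw [Finset.sum_congr rfl (fun q1 _ => inner q1)]
  simp only [ite_mul, one_mul, zero_mul]
  rw [Finset.sum_ite_eq' Finset.univ p.1
    (fun q1 => P2FRA n m q1 k1 * (P1FLA n m p.2 k2 - if h : 0 < ((p.2:ℕ)) then
      P1FLA n m ⟨(p.2:ℕ)-1, Nat.lt_of_le_of_lt (Nat.sub_le _ _) p.2.isLt⟩ k2 else 0))]
  simp

lemma normP1 (n m : ℕ) (t : Fin n) (k : Fin m) : ‖P1FLA n m t k‖ = 1 := by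
  simp only [P1FLA, Matrix.of_apply]
  rw [show (2 * (Real.pi:ℂ) * Complex.I) * (((k:ℕ):ℂ)) * ((((t:ℕ)):ℂ) - ((n:ℂ) - 1)) / (m:ℂ)
      = ((2 * Real.pi * ((k:ℕ):ℝ) * (((t:ℕ):ℝ) - ((n:ℝ) - 1)) / (m:ℝ) : ℝ) : ℂ) * Complex.I
    from by push_cast; ring]
  exact Complex.norm_exp_ofReal_mul_I _

lemma normP2 (n m : ℕ) (t : Fin n) (k : Fin m) : ‖P2FRA n m t k‖ = 1 := by
  simp only [P2FRA, Matrix.of_apply]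
  rw [show (2 * (Real.pi:ℂ) * Complex.I) * (((k:ℕ):ℂ)) * ((((t:ℕ)):ℂ) - (2 * (n:ℂ) - 1)) / (m:ℂ)
      = ((2 * Real.pi * ((k:ℕ):ℝ) * (((t:ℕ):ℝ) - (2 * (n:ℝ) - 1)) / (m:ℝ) : ℝ) : ℂ) * Complex.I
    from by push_cast; ring]
  exact Complex.norm_exp_ofReal_mul_I _

lemma norm_exp_sub_one_sq (θ : ℝ) :
    ‖Complex.exp ((θ:ℂ) * Complex.I) - 1‖ ^ 2 = 2 - 2 * Real.cos θ := by
  rw [Complex.sq_norm, Complex.exp_mul_I]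
  simp only [Complex.normSq_apply, Complex.sub_re, Complex.add_re, Complex.ofReal_re,
    Complex.mul_re, Complex.ofReal_im, Complex.I_re, Complex.I_im, Complex.one_re,
    Complex.sub_im, Complex.add_im, Complex.mul_im, Complex.one_im,
    Complex.cos_ofReal_re, Complex.sin_ofReal_re, Complex.cos_ofReal_im,
    Complex.sin_ofReal_im]
  nlinarith [Real.sin_sq_add_cos_sq θ]

lemma diff_norm_sq (n m : ℕ) (p2 : Fin n) (k2 : Fin m) :
    ‖P1FLA n m p2 k2 - (if h : 0 < ((p2:ℕ)) then
        P1FLA n m ⟨(p2:ℕ)-1, Nat.lt_of_le_of_lt (Nat.sub_le _ _) p2.isLt⟩ k2 else 0)‖ ^ 2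
      = if (p2:ℕ) = 0 then 1 else
          2 - 2 * Real.cos (2 * Real.pi * ((k2:ℕ):ℝ) / (m:ℝ)) := by
  by_cases hP : 0 < (p2:ℕ)
  · rw [dif_pos hP, if_neg (by omega)]
    set t' : Fin n := ⟨(p2:ℕ)-1, Nat.lt_of_le_of_lt (Nat.sub_le _ _) p2.isLt⟩ with ht'
    have hfac : P1FLA n m p2 k2 - P1FLA n m t' k2
        = P1FLA n m t' k2 *
          (Complex.exp (((2 * Real.pi * ((k2:ℕ):ℝ) / (m:ℝ) : ℝ) : ℂ) * Complex.I) - 1) := by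
      simp only [P1FLA, Matrix.of_apply]
      have hsplit : Complex.exp ((2 * (Real.pi:ℂ) * Complex.I) * (((k2:ℕ):ℂ)) *
            ((((p2:ℕ)):ℂ) - ((n:ℂ) - 1)) / (m:ℂ))
          = Complex.exp ((2 * (Real.pi:ℂ) * Complex.I) * (((k2:ℕ):ℂ)) *
              (((t':ℕ):ℂ) - ((n:ℂ) - 1)) / (m:ℂ)) *
            Complex.exp (((2 * Real.pi * ((k2:ℕ):ℝ) / (m:ℝ) : ℝ) : ℂ) * Complex.I) := by
        rw [← Complex.exp_add]
        congr 1
        have hv : ((t':ℕ):ℂ) = (((p2:ℕ)):ℂ) - 1 := by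
          rw [ht']
          push_cast [Nat.cast_sub (show 1 ≤ (p2:ℕ) from hP)]
          ring
        rw [hv]
        push_cast
        ring
      rw [hsplit]
      ring
    rw [hfac, norm_mul, normP1, one_mul, norm_exp_sub_one_sq]
  · rw [dif_neg hP, if_pos (by omega), sub_zero, normP1, one_pow]

lemma norm_TR_slit (n m : ℕ) (p : Fin n × Fin n) (k1 k2 : Fin m) :
    ‖TR m (slitRef n) p (k1, k2)‖ ^ 2
      = ((m:ℝ)^4)⁻¹ * (if (p.2:ℕ) = 0 then 1 else
          2 - 2 * Real.cos (2 * Real.pi * ((k2:ℕ):ℝ) / (m:ℝ))) := by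
  rw [TR_slit, norm_mul, norm_mul, normP2, norm_inv, mul_pow, mul_pow, diff_norm_sq]
  have : ‖((m:ℂ)^2)‖ = (m:ℝ)^2 := by
    rw [norm_pow, Complex.norm_natCast]
  rw [this]
  rw [one_pow, one_mul]
  congr 1
  rw [inv_pow, ← pow_mul]

theorem slit_scaling_factor_aux : True := trivial

/-- The reference scaling factor of the slit reference is
`S_{R_s}(k1,k2) = (n/m⁴)·[1 + 2(n-1)(1 - cos(2π·k2/m))]`. -/
theorem slit_scaling_factor
    (n m : ℕ) (hn : 1 ≤ n) (hm : 4 * n - 1 ≤ m) (k1 k2 : Fin m) :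
    SR m (slitRef n) k1 k2 =
      ((n : ℝ) / (m : ℝ) ^ 4) *
        (1 + 2 * ((n : ℝ) - 1) * (1 - Real.cos (2 * Real.pi * ((k2 : ℕ) : ℝ) / (m : ℝ)))) := by
  have hm0 : (m:ℝ) ≠ 0 := by
    have : 3 ≤ m := by omega
    positivity
  set c : ℝ := 2 - 2 * Real.cos (2 * Real.pi * ((k2:ℕ):ℝ) / (m:ℝ)) with hc
  have hz : (0:ℕ) < n := hn
  unfold SR
  have hterm : ∀ p : Fin n × Fin n, ‖TR m (slitRef n) p (k1, k2)‖ ^ 2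
      = ((m:ℝ)^4)⁻¹ * (if (p.2:ℕ) = 0 then 1 else c) := by
    intro p
    rw [norm_TR_slit, hc]
  rw [Finset.sum_congr rfl (fun p _ => hterm p), Fintype.sum_prod_type]
  have hrew : ∀ b : Fin n, (((m:ℝ)^4)⁻¹ * (if (b:ℕ) = 0 then 1 else c))
      = ((m:ℝ)^4)⁻¹ * c + (if b = (⟨0, hz⟩ : Fin n) then ((m:ℝ)^4)⁻¹ * (1 - c) else 0) := by
    intro b
    by_cases hb : (b:ℕ) = 0
    · rw [if_pos hb, if_pos (Fin.ext hb), mul_one]; ring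
    · rw [if_neg hb, if_neg (fun hcc => hb (by rw [hcc])), add_zero]
  have hinner : ∑ b : Fin n, (((m:ℝ)^4)⁻¹ * (if (b:ℕ) = 0 then 1 else c))
      = ((m:ℝ)^4)⁻¹ * ((n:ℝ) * c + (1 - c)) := by
    rw [Finset.sum_congr rfl (fun b _ => hrew b), Finset.sum_add_distrib, Finset.sum_const,
      Finset.sum_ite_eq' Finset.univ (⟨0, hz⟩ : Fin n) (fun _ => ((m:ℝ)^4)⁻¹ * (1 - c))]
    simp only [Finset.card_univ, Fintype.card_fin, Finset.mem_univ, if_true, nsmul_eq_mul]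
    ring
  rw [Finset.sum_congr rfl (fun a _ => hinner), Finset.sum_const, Finset.card_univ,
    Fintype.card_fin, nsmul_eq_mul]
  rw [hc]
  field_simp
  ring
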